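/- (Bäcklund transformation s₋ for Painlevé III′.) Let (q, p, H) solve the Painlevé III′ Hamiltonian system with parameters v1, v2 ∈ ℂ on an open set U ⊆ ℂ with 0 ∉ U, and assume p(s) ≠ 0 and p(s) ≠ 1 for all s ∈ U. Define q̃(s) := q(s) − (v1·p(s) − (v1+v2)/2) / (p(s)·(p(s) − 1)) and p̃(s) := p(s). Then (q̃, p̃) solves the Painlevé III′ Hamiltonian system with parameters (−v1, −v2) on U, and its Hamiltonian H̃ satisfies s·H̃(s) = s·H(s) for all s ∈ U. -/

import Mathlib

set_option maxHeartbeats 2000000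


open Complex

/-- `(q, p, H)` solves the Painlevé III′ Hamiltonian system with parameters
`v1, v2` on an open set `U ⊆ ℂ` with `0 ∉ U`. -/
def SolvesPIII' (v1 v2 : ℂ) (U : Set ℂ) (q p H : ℂ → ℂ) : Prop :=
  IsOpen U ∧ (0 : ℂ) ∉ U ∧
    DifferentiableOn ℂ q U ∧ DifferentiableOn ℂ p U ∧
    (∀ s ∈ U, s * H s =
      q s ^ 2 * p s ^ 2 - (q s ^ 2 + v1 * q s - s) * p s
        + (1 / 2) * (v1 + v2) * q s) ∧
    (∀ s ∈ U, s * deriv q s = 2 * q s ^ 2 * p s - q s ^ 2 - v1 * q s + s) ∧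
    (∀ s ∈ U, s * deriv p s =
      -2 * q s * p s ^ 2 + 2 * q s * p s + v1 * p s - (1 / 2) * (v1 + v2))

/-- Bäcklund transformation `s₋` for Painlevé III′:
`q̃ = q − (v1·p − (v1+v2)/2)/(p(p−1))`, `p̃ = p` solves the system with
parameters `(−v1, −v2)`, and the Hamiltonian is unchanged. -/
theorem painleveIIIprime_backlund_sminus (v1 v2 : ℂ) (U : Set ℂ)
    (q p H : ℂ → ℂ)
    (hsol : SolvesPIII' v1 v2 U q p H)
    (hp0 : ∀ s ∈ U, p s ≠ 0)
    (hp1 : ∀ s ∈ U, p s ≠ 1)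
    (qt pt : ℂ → ℂ)
    (hqt : ∀ s ∈ U, qt s =
      q s - (v1 * p s - (v1 + v2) / 2) / (p s * (p s - 1)))
    (hpt : ∀ s ∈ U, pt s = p s) :
    ∃ Ht : ℂ → ℂ,
      SolvesPIII' (-v1) (-v2) U qt pt Ht ∧
      ∀ s ∈ U, s * Ht s = s * H s := by
  obtain ⟨hU, h0, hqd, hpd, hH, hq', hp'⟩ := hsol
  set c : ℂ := (v1 + v2) / 2 with hc
  refine ⟨fun s => (qt s ^ 2 * pt s ^ 2 - (qt s ^ 2 + (-v1) * qt s - s) * pt s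
      + (1 / 2) * ((-v1) + (-v2)) * qt s) / s, ⟨hU, h0, ?_, ?_, ?_, ?_, ?_⟩, ?_⟩
  · -- qt differentiable
    refine DifferentiableOn.congr ?_ hqt
    refine hqd.sub ?_
    refine DifferentiableOn.div (((hpd.const_mul v1).sub_const c))
      (hpd.mul (hpd.sub_const 1)) ?_
    intro s hs
    exact mul_ne_zero (hp0 s hs) (sub_ne_zero.mpr (hp1 s hs))
  · exact DifferentiableOn.congr hpd hpt
  · intro s hs
    have hs0 : s ≠ 0 := fun h => h0 (h ▸ hs)
    field_simp
  · -- deriv qt equation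
    intro s hs
    have hs0 : s ≠ 0 := fun h => h0 (h ▸ hs)
    have hmem : U ∈ nhds s := hU.mem_nhds hs
    have hpne := hp0 s hs
    have hp1' : p s - 1 ≠ 0 := sub_ne_zero.mpr (hp1 s hs)
    have hden : p s * (p s - 1) ≠ 0 := mul_ne_zero hpne hp1'
    have hqda : HasDerivAt q (deriv q s) s :=
      ((hqd.differentiableAt hmem)).hasDerivAt
    have hpda : HasDerivAt p (deriv p s) s :=
      ((hpd.differentiableAt hmem)).hasDerivAt
    have hgd : HasDerivAt (fun t => q t - (v1 * p t - c) / (p t * (p t - 1)))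
        (deriv q s -
          ((v1 * deriv p s) * (p s * (p s - 1)) -
            (v1 * p s - c) * (deriv p s * (p s - 1) + p s * deriv p s)) /
            (p s * (p s - 1)) ^ 2) s := by
      exact hqda.sub (((hpda.const_mul v1).sub_const c).div
        (hpda.mul (hpda.sub_const 1)) hden)
    have heq : qt =ᶠ[nhds s] fun t => q t - (v1 * p t - c) / (p t * (p t - 1)) :=
      Filter.eventuallyEq_of_mem hmem hqt
    have hderiv : deriv qt s = deriv q s -
          ((v1 * deriv p s) * (p s * (p s - 1)) -
            (v1 * p s - c) * (deriv p s * (p s - 1) + p s * deriv p s)) /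
            (p s * (p s - 1)) ^ 2 := by
      rw [heq.deriv_eq, hgd.deriv]
    have hdq : deriv q s = (2 * q s ^ 2 * p s - q s ^ 2 - v1 * q s + s) / s := by
      rw [eq_div_iff hs0]; linear_combination hq' s hs
    have hdp : deriv p s =
        (-2 * q s * p s ^ 2 + 2 * q s * p s + v1 * p s - c) / s := by
      rw [eq_div_iff hs0]; linear_combination hp' s hs
    rw [hderiv, hqt s hs, hpt s hs, hdq, hdp]
    field_simp
    ring
  · -- deriv pt equation
    intro s hs
    have hmem : U ∈ nhds s := hU.mem_nhds hs
    have hpne := hp0 s hs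
    have hp1' : p s - 1 ≠ 0 := sub_ne_zero.mpr (hp1 s hs)
    have hden : p s * (p s - 1) ≠ 0 := mul_ne_zero hpne hp1'
    have hG : (v1 * p s - c) / (p s * (p s - 1)) * (p s * (p s - 1)) =
        v1 * p s - c := div_mul_cancel₀ _ hden
    have heq : pt =ᶠ[nhds s] p := Filter.eventuallyEq_of_mem hmem hpt
    rw [heq.deriv_eq, hqt s hs, hpt s hs]
    linear_combination hp' s hs - 2 * hG
  · -- Hamiltonian equality
    intro s hs
    have hs0 : s ≠ 0 := fun h => h0 (h ▸ hs)
    have hpne := hp0 s hs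
    have hp1' : p s - 1 ≠ 0 := sub_ne_zero.mpr (hp1 s hs)
    have hden : p s * (p s - 1) ≠ 0 := mul_ne_zero hpne hp1'
    have hG : (v1 * p s - c) / (p s * (p s - 1)) * (p s * (p s - 1)) =
        v1 * p s - c := div_mul_cancel₀ _ hden
    rw [mul_div_cancel₀ _ hs0, hH s hs, hqt s hs, hpt s hs]
    linear_combination ((v1 * p s - c) / (p s * (p s - 1)) - 2 * q s) * hG
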